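/- Let p, q be orthogonal projections on a complex Hilbert space H. If p and q are in general position (p ∧ q = 0, (p ∨ q − p) ∧ q = 0, (p ∨ q − q) ∧ p = 0), then the closure of p(q(H)) equals p(H) restricted to the range of p ∨ q; in particular the closure of the image pqH equals the range of p when p ≤ p ∨ q. -/

import Mathlib

open LinearMap Filter Topology ENNReal

section Preamble

variable {H : Type} [NormedAddCommGroup H] [InnerProductSpace ℂ H] [CompleteSpace H]

/-- An orthogonal projection: a self-adjoint idempotent bounded operator. -/
def IsProjOp (p : H →L[ℂ] H) : Prop := IsIdempotentElem p ∧ IsSelfAdjoint p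

/-- The orthogonal projection onto the closure of a submodule. -/
noncomputable def sProj (K : Submodule ℂ H) : H →L[ℂ] H :=
  haveI : CompleteSpace K.topologicalClosure :=
    K.isClosed_topologicalClosure.completeSpace_coe
  K.topologicalClosure.subtypeL.comp (K.topologicalClosure.orthogonalProjectionOnto)

/-- `p ∨ q`: projection onto the closed span of the ranges. -/
noncomputable def pSup (p q : H →L[ℂ] H) : H →L[ℂ] H :=
  sProj (LinearMap.range (p : H →ₗ[ℂ] H) ⊔ LinearMap.range (q : H →ₗ[ℂ] H))

/-- `p ∧ q`: projection onto the intersection of the ranges. -/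
noncomputable def pInf (p q : H →L[ℂ] H) : H →L[ℂ] H :=
  sProj (LinearMap.range (p : H →ₗ[ℂ] H) ⊓ LinearMap.range (q : H →ₗ[ℂ] H))

/-- Supremum of a family of projections. -/
noncomputable def pSupFam {ι : Type} (q : ι → H →L[ℂ] H) : H →L[ℂ] H :=
  sProj (⨆ i, LinearMap.range ((q i) : H →ₗ[ℂ] H))

/-- Order on projections via ranges. -/
def pLe (p q : H →L[ℂ] H) : Prop := LinearMap.range (p : H →ₗ[ℂ] H) ≤ LinearMap.range (q : H →ₗ[ℂ] H)

/-- `r n ↗ rl`: increasing sequence of projections with supremum `rl`. -/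
def AscendsTo (r : ℕ → H →L[ℂ] H) (rl : H →L[ℂ] H) : Prop :=
  (∀ n, pLe (r n) (r (n + 1))) ∧ (∀ n, pLe (r n) rl) ∧
    (⨆ n, LinearMap.range ((r n) : H →ₗ[ℂ] H)).topologicalClosure = LinearMap.range (rl : H →ₗ[ℂ] H)

/-- The set of orthogonal projections belonging to a von Neumann algebra. -/
def projSet (A : VonNeumannAlgebra H) : Set (H →L[ℂ] H) :=
  {p | p ∈ A ∧ IsProjOp p}

/-- An ideal of projections inside the projection lattice of `A`. -/
structure IsIdealOfProj (A : VonNeumannAlgebra H) (M : Set (H →L[ℂ] H)) : Prop where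
  subset : M ⊆ projSet A
  downward : ∀ p q, p ∈ projSet A → q ∈ M → pLe p q → p ∈ M
  supClosed : ∀ p ∈ M, ∀ q ∈ M, ‖p * q‖ < 1 → pSup p q ∈ M
  total : (⨆ p ∈ M, LinearMap.range (p : H →ₗ[ℂ] H)).topologicalClosure = ⊤

/-- Murray–von Neumann equivalence of projections in `A`. -/
def MvNEquiv (A : VonNeumannAlgebra H) (p q : H →L[ℂ] H) : Prop :=
  ∃ u, u ∈ A ∧ star u * u = p ∧ u * star u = q

/-- A projection `p` of `A` is finite. -/
def IsFiniteProjIn (A : VonNeumannAlgebra H) (p : H →L[ℂ] H) : Prop :=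
  ∀ q, q ∈ projSet A → pLe q p → MvNEquiv A p q → q = p

/-- `A` is a finite von Neumann algebra. -/
def IsFiniteVN (A : VonNeumannAlgebra H) : Prop := IsFiniteProjIn A 1

/-- `A` is a semifinite von Neumann algebra. -/
def IsSemifiniteVN (A : VonNeumannAlgebra H) : Prop :=
  ∀ p ∈ projSet A, p ≠ 0 → ∃ q ∈ projSet A, q ≠ 0 ∧ pLe q p ∧ IsFiniteProjIn A q

/-- An abelian projection of `A`. -/
def IsAbelianProjIn (A : VonNeumannAlgebra H) (e : H →L[ℂ] H) : Prop :=
  e ∈ projSet A ∧ ∀ a ∈ A, ∀ b ∈ A, (e * a * e) * (e * b * e) = (e * b * e) * (e * a * e)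

/-- `A` has a direct summand of type I₂. -/
def HasTypeI2Summand (A : VonNeumannAlgebra H) : Prop :=
  ∃ z e₁ e₂ : H →L[ℂ] H, z ∈ projSet A ∧ z ≠ 0 ∧ (∀ a ∈ A, z * a = a * z) ∧
    IsAbelianProjIn A e₁ ∧ IsAbelianProjIn A e₂ ∧ e₁ * e₂ = 0 ∧ e₁ + e₂ = z ∧
    MvNEquiv A e₁ e₂

/-- `μ` is a (completely additive) measure on a set `P` of projections. -/
def IsMeasureOn (P : Set (H →L[ℂ] H)) (μ : (H →L[ℂ] H) → ℝ≥0∞) : Prop :=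
  ∀ (ι : Type) (e : ι → H →L[ℂ] H) (f : H →L[ℂ] H),
    (∀ i, e i ∈ P) → f ∈ P → (Pairwise fun i j => e i * e j = 0) →
    f = pSupFam e → μ f = ∑' i, μ (e i)

/-- `μ` is a σ-finite measure on the projections of `A`. -/
def IsSigmaFinite (A : VonNeumannAlgebra H) (μ : (H →L[ℂ] H) → ℝ≥0∞) : Prop :=
  ∃ p : ℕ → H →L[ℂ] H, (∀ n, p n ∈ projSet A) ∧ AscendsTo p 1 ∧ ∀ n, μ (p n) < ⊤

/-- `p` is a projection of finite `μ`-measure relative to the family `M`. -/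
def FinMeasProjOn (M : Set (H →L[ℂ] H)) (μ : (H →L[ℂ] H) → ℝ≥0∞)
    (p : H →L[ℂ] H) : Prop :=
  (⨆ q ∈ {q | q ∈ M ∧ pLe q p ∧ μ q < ⊤}, LinearMap.range (q : H →ₗ[ℂ] H)).topologicalClosure
      = LinearMap.range (p : H →ₗ[ℂ] H) ∧
    (⨆ q ∈ {q | q ∈ M ∧ pLe q p ∧ μ q < ⊤}, μ q) < ⊤

/-- A faithful normal finite trace on `A` (the properties of it that we use). -/
structure IsFNFiniteTrace (A : VonNeumannAlgebra H) (τ : (H →L[ℂ] H) → ℝ) : Prop where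
  add : ∀ a b, τ (a + b) = τ a + τ b
  tracial : ∀ a b, τ (a * b) = τ (b * a)
  nonneg : ∀ a, 0 ≤ τ (star a * a)
  faithful : ∀ p, p ∈ projSet A → τ p = 0 → p = 0
  normal : ∀ (r : ℕ → H →L[ℂ] H) (rl : H →L[ℂ] H), (∀ n, r n ∈ projSet A) →
    rl ∈ projSet A → AscendsTo r rl →
    Tendsto (fun n => τ (r n)) atTop (nhds (τ rl))

end Preamble


section Aux

variable {H : Type} [NormedAddCommGroup H] [InnerProductSpace ℂ H] [CompleteSpace H]

lemma sProj_apply_of_mem (K : Submodule ℂ H) {x : H} (hx : x ∈ K.topologicalClosure) :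
    sProj K x = x := by
  haveI : CompleteSpace K.topologicalClosure :=
    K.isClosed_topologicalClosure.completeSpace_coe
  simp only [sProj, ContinuousLinearMap.coe_comp', Function.comp_apply,
    Submodule.coe_subtypeL', Submodule.coe_subtype]
  exact (Submodule.starProjection_eq_self_iff (K := K.topologicalClosure)).mpr hx

lemma range_eq_ker_of_idem {p : H →L[ℂ] H} (hpi : IsIdempotentElem p) :
    LinearMap.range (p : H →ₗ[ℂ] H) = LinearMap.ker ((1 - p : H →L[ℂ] H) : H →ₗ[ℂ] H) := by
  ext x
  constructor
  · rintro ⟨y, rfl⟩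
    have : p (p y) = p y := by
      have := congrArg (fun f : H →L[ℂ] H => f y) hpi
      simpa [ContinuousLinearMap.mul_apply] using this
    simp [LinearMap.mem_ker, ContinuousLinearMap.sub_apply, this]
  · intro hx
    have hx' : x - p x = 0 := by
      simpa [ContinuousLinearMap.sub_apply] using hx
    exact ⟨x, by rw [eq_comm, ← sub_eq_zero]; simpa using hx'⟩

lemma isClosed_range_of_idem {p : H →L[ℂ] H} (hpi : IsIdempotentElem p) :
    IsClosed (LinearMap.range (p : H →ₗ[ℂ] H) : Set H) := by
  rw [range_eq_ker_of_idem hpi]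
  exact ContinuousLinearMap.isClosed_ker _

end Aux

/-- in general position, the closure of `pqH` equals the range of `p`. -/
theorem stmt1 {H : Type} [NormedAddCommGroup H] [InnerProductSpace ℂ H] [CompleteSpace H]
    (p q : H →L[ℂ] H) (hp : IsProjOp p) (hq : IsProjOp q)
    (hg1 : pInf p q = 0) (hg2 : pInf (pSup p q - p) q = 0)
    (hg3 : pInf (pSup p q - q) p = 0) :
    (LinearMap.range ((p * q : H →L[ℂ] H) : H →ₗ[ℂ] H)).topologicalClosure = LinearMap.range (p : H →ₗ[ℂ] H) := by
  obtain ⟨hpi, hpa⟩ := hp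
  obtain ⟨hqi, hqa⟩ := hq
  have hpadj : ContinuousLinearMap.adjoint p = p := hpa.adjoint_eq
  have hqadj : ContinuousLinearMap.adjoint q = q := hqa.adjoint_eq
  have hpfix : ∀ x ∈ LinearMap.range (p : H →ₗ[ℂ] H), p x = x := by
    rintro x ⟨y, rfl⟩
    have := congrArg (fun f : H →L[ℂ] H => f y) hpi
    simpa [ContinuousLinearMap.mul_apply] using this
  have hclosed : IsClosed (LinearMap.range (p : H →ₗ[ℂ] H) : Set H) := isClosed_range_of_idem hpi
  set K := (LinearMap.range ((p * q : H →L[ℂ] H) : H →ₗ[ℂ] H)).topologicalClosure with hK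
  haveI : CompleteSpace K := (LinearMap.range ((p * q : H →L[ℂ] H) : H →ₗ[ℂ] H)).isClosed_topologicalClosure.completeSpace_coe
  have hKle : K ≤ LinearMap.range (p : H →ₗ[ℂ] H) := by
    apply Submodule.topologicalClosure_minimal _ _ hclosed
    rintro x ⟨y, rfl⟩
    exact ⟨q y, rfl⟩
  refine le_antisymm hKle ?_
  intro x hx
  set y := x - (K.orthogonalProjectionOnto x : H) with hy
  have hyperp : y ∈ Kᗮ := K.sub_starProjection_mem_orthogonal x
  have hyp : y ∈ LinearMap.range (p : H →ₗ[ℂ] H) :=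
    Submodule.sub_mem _ hx (hKle (K.orthogonalProjectionOnto x).2)
  have hpinner : ∀ u v : H, (inner ℂ (p u) v : ℂ) = inner ℂ u (p v) := by
    intro u v
    nth_rewrite 1 [← hpadj]
    exact ContinuousLinearMap.adjoint_inner_left p v u
  have hqinner : ∀ u v : H, (inner ℂ (q u) v : ℂ) = inner ℂ u (q v) := by
    intro u v
    nth_rewrite 1 [← hqadj]
    exact ContinuousLinearMap.adjoint_inner_left q v u
  have hqfix : ∀ z : H, q (q z) = q z := by
    intro z
    have := congrArg (fun f : H →L[ℂ] H => f z) hqi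
    simpa [ContinuousLinearMap.mul_apply] using this
  -- q y = 0
  have hqz : ∀ z : H, (inner ℂ (q z) y : ℂ) = 0 := by
    intro z
    have h1 : (inner ℂ ((p * q) z) y : ℂ) = 0 := by
      have := hyperp ((p * q) z) (Submodule.le_topologicalClosure _ ⟨z, rfl⟩)
      simpa [inner_eq_zero_symm] using this
    have h2 : (inner ℂ ((p * q) z) y : ℂ) = inner ℂ (q z) (p y) := by
      rw [ContinuousLinearMap.mul_apply, hpinner]
    rw [h2, hpfix y hyp] at h1
    exact h1
  have hqy : q y = 0 := by
    have h0 : (inner ℂ (q y) (q y) : ℂ) = 0 := by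
      calc (inner ℂ (q y) (q y) : ℂ) = inner ℂ y (q (q y)) := hqinner y (q y)
        _ = inner ℂ y (q y) := by rw [hqfix]
        _ = 0 := by rw [← inner_conj_symm, hqz y]; simp
    exact inner_self_eq_zero.mp h0
  -- (pSup p q) y = y
  have hsy : pSup p q y = y := by
    apply sProj_apply_of_mem
    exact Submodule.le_topologicalClosure _ (Submodule.mem_sup_left hyp)
  have hmem : y ∈ LinearMap.range ((pSup p q - q : H →L[ℂ] H) : H →ₗ[ℂ] H) ⊓ LinearMap.range (p : H →ₗ[ℂ] H) := by
    refine ⟨⟨y, ?_⟩, hyp⟩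
    simp [ContinuousLinearMap.sub_apply, hsy, hqy]
  have hy0 : y = 0 := by
    have := sProj_apply_of_mem (LinearMap.range ((pSup p q - q : H →L[ℂ] H) : H →ₗ[ℂ] H) ⊓ LinearMap.range (p : H →ₗ[ℂ] H))
      (Submodule.le_topologicalClosure _ hmem)
    rw [show sProj (LinearMap.range ((pSup p q - q : H →L[ℂ] H) : H →ₗ[ℂ] H) ⊓ LinearMap.range (p : H →ₗ[ℂ] H)) = pInf (pSup p q - q) p from rfl, hg3] at this
    simpa using this.symm
  have : x = (K.orthogonalProjectionOnto x : H) := by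
    have := sub_eq_zero.mp hy0
    exact this
  rw [this]
  exact (K.orthogonalProjectionOnto x).2
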